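/- Let D ⊂ ℝⁿ be a nonempty bounded convex open set, T > 0, δ ∈ (0,1], β > 0, and C₁, C₂ ≥ 0. Let u : D × [0,T] → ℝᴺ be measurable with: |u(x,t) − u(y,t)| ≤ C₁ |x−y|^δ for all t ∈ [0,T] and all x, y ∈ D, and ‖u(·,t) − u(·,s)‖_{L²(D)} ≤ C₂ |t−s|^β for all s, t ∈ [0,T]. Then, with η := min(βδ/n, β/2), there exists a constant C₄ depending only on C₁, C₂, n and D such that |u(x,t) − u(x,s)| ≤ C₄ |t−s|^η for all x ∈ D and s, t ∈ [0,T]. Consequently, u is jointly Hölder continuous on D × [0,T] with exponent min(δ, η). -/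

import Mathlib

open MeasureTheory Set
open scoped ENNReal

lemma aux_measure_lb {n : ℕ} {D : Set (EuclideanSpace ℝ (Fin n))}
    (hDconv : Convex ℝ D) (hDbd : Bornology.IsBounded D)
    {x : EuclideanSpace ℝ (Fin n)} (hx : x ∈ D)
    {ρ : ℝ} (hρ : 0 < ρ) (hρR : ρ ≤ Metric.diam D) :
    ENNReal.ofReal ((ρ / Metric.diam D) ^ n) * volume D
      ≤ volume (Metric.closedBall x ρ ∩ D) := by
  set R := Metric.diam D with hR
  have hRpos : 0 < R := lt_of_lt_of_le hρ hρR
  set lam := ρ / R with hlam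
  have hlam0 : 0 < lam := div_pos hρ hRpos
  have hlam1 : lam ≤ 1 := (div_le_one hRpos).2 hρR
  have hsub : AffineMap.homothety x lam '' D ⊆ Metric.closedBall x ρ ∩ D := by
    rintro _ ⟨y, hy, rfl⟩
    have happ : AffineMap.homothety x lam y = lam • (y - x) + x := by
      simp [AffineMap.homothety_apply]
    constructor
    · rw [happ, Metric.mem_closedBall]
      have hdist : dist (lam • (y - x) + x) x = lam * dist y x := by
        rw [dist_eq_norm]
        simp [norm_smul, abs_of_pos hlam0, dist_eq_norm]
      rw [hdist]
      calc lam * dist y x ≤ lam * R :=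
            mul_le_mul_of_nonneg_left (Metric.dist_le_diam_of_mem hDbd hy hx) hlam0.le
        _ = ρ := by rw [hlam]; exact div_mul_cancel₀ ρ hRpos.ne'
    · rw [happ]
      have : lam • (y - x) + x = (1 - lam) • x + lam • y := by module
      rw [this]
      exact hDconv hx hy (by linarith) hlam0.le (by ring)
  calc ENNReal.ofReal (lam ^ n) * volume D
      = volume (AffineMap.homothety x lam '' D) := by
        rw [Measure.addHaar_image_homothety, finrank_euclideanSpace_fin,
          abs_of_pos (pow_pos hlam0 n)]
    _ ≤ _ := measure_mono hsub

lemma aux_key {n N : ℕ} (hn : 0 < n)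
    (D : Set (EuclideanSpace ℝ (Fin n))) (hDne : D.Nonempty)
    (hDbd : Bornology.IsBounded D) (hDconv : Convex ℝ D) (hDopen : IsOpen D)
    (T : ℝ) (hT : 0 < T) (δ : ℝ) (hδ : δ ∈ Set.Ioc (0 : ℝ) 1) (β : ℝ) (hβ : 0 < β)
    (C₁ C₂ : ℝ) (hC₁ : 0 ≤ C₁) (hC₂ : 0 ≤ C₂)
    (u : EuclideanSpace ℝ (Fin n) → ℝ → EuclideanSpace ℝ (Fin N))
    (humeas : Measurable (fun q : EuclideanSpace ℝ (Fin n) × ℝ => u q.1 q.2))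
    (hRpos : 0 < Metric.diam D)
    (hspace : ∀ t ∈ Set.Icc (0 : ℝ) T, ∀ x ∈ D, ∀ y ∈ D,
      ‖u x t - u y t‖ ≤ C₁ * ‖x - y‖ ^ δ)
    (htime : ∀ s ∈ Set.Icc (0 : ℝ) T, ∀ t ∈ Set.Icc (0 : ℝ) T,
      eLpNorm (fun x => u x t - u x s) 2 (volume.restrict D)
        ≤ ENNReal.ofReal (C₂ * |t - s| ^ β)) :
    ∃ C₄ : ℝ, 0 ≤ C₄ ∧ ∀ x ∈ D, ∀ s ∈ Set.Icc (0 : ℝ) T, ∀ t ∈ Set.Icc (0 : ℝ) T,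
      ‖u x t - u x s‖ ≤ C₄ * |t - s| ^ (min (β * δ / n) (β / 2)) := by
  have hδ0 : 0 < δ := hδ.1
  have hn' : (1 : ℝ) ≤ (n : ℝ) := by exact_mod_cast hn
  set R := Metric.diam D with hRdef
  set M := (volume D).toReal with hMdef
  have hDvolpos : 0 < volume D := hDopen.measure_pos volume hDne
  have hDvoltop : volume D < ⊤ := hDbd.measure_lt_top
  have hM : 0 < M := ENNReal.toReal_pos hDvolpos.ne' hDvoltop.ne
  -- exponents
  set θ : ℝ := β / (δ + n / 2) with hθdef
  have hden : 0 < δ + (n : ℝ) / 2 := by positivity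
  have hθ : 0 < θ := div_pos hβ hden
  set γ : ℝ := θ * δ with hγdef
  have hγ : 0 < γ := mul_pos hθ hδ0
  set η : ℝ := min (β * δ / n) (β / 2) with hηdef
  have hη : 0 < η := lt_min (by positivity) (by positivity)
  have hηγ : η ≤ γ := by
    rcases le_total δ ((n : ℝ) / 2) with hc | hc
    · refine le_trans (min_le_left _ _) ?_
      rw [hγdef, hθdef, div_mul_eq_mul_div]
      exact div_le_div_of_nonneg_left (by positivity) hden (by linarith)
    · refine le_trans (min_le_right _ _) ?_
      rw [hγdef, hθdef, div_mul_eq_mul_div]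
      calc β / 2 = β * δ / (2 * δ) := by field_simp
        _ ≤ β * δ / (δ + n / 2) := div_le_div_of_nonneg_left (by positivity) hden (by linarith)
  have hβγ : β - θ * n / 2 = γ := by
    rw [hγdef, hθdef]
    field_simp
    ring
  -- the constant
  set K : ℝ := 2 * C₁ * R ^ δ / T ^ γ + C₂ * T ^ (θ * n / 2) / M ^ ((1:ℝ)/2) with hKdef
  have hK : 0 ≤ K := by positivity
  refine ⟨K * T ^ (γ - η), by positivity, ?_⟩
  intro x hx s hs t ht
  set h := |t - s| with hhdef
  have hh0 : 0 ≤ h := abs_nonneg _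
  have hhT : h ≤ T := by
    rw [hhdef, abs_sub_le_iff]
    constructor <;> [linarith [ht.2, hs.1]; linarith [hs.2, ht.1]]
  rcases eq_or_lt_of_le hh0 with hh | hh
  · -- h = 0, so t = s
    have h0 : |t - s| = 0 := hh.symm
    have hts : t = s := by have := abs_eq_zero.mp h0; linarith
    subst hts
    simp [hhdef, Real.zero_rpow hη.ne']
  -- main case h > 0
  have key : ‖u x t - u x s‖ ≤ K * h ^ γ := by
    -- choose the radius ρ = R * (h/T)^θ
    have hhT0 : 0 < h / T := div_pos hh hT
    have hhT1 : h / T ≤ 1 := (div_le_one hT).2 hhT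
    set r : ℝ := (h / T) ^ θ with hrdef
    have hr0 : 0 < r := Real.rpow_pos_of_pos hhT0 θ
    have hr1 : r ≤ 1 := Real.rpow_le_one hhT0.le hhT1 hθ.le
    set ρ : ℝ := R * r with hρdef
    have hρ0 : 0 < ρ := mul_pos hRpos hr0
    have hρR : ρ ≤ R := mul_le_of_le_one_right hRpos.le hr1
    set A := Metric.closedBall x ρ ∩ D with hAdef
    have hAsub : A ⊆ D := inter_subset_right
    -- lower bound on the measure of A
    have hAlb : ENNReal.ofReal (r ^ n) * volume D ≤ volume A := by
      have h1 := aux_measure_lb hDconv hDbd hx hρ0 hρR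
      have h2 : ρ / R = r := by rw [hρdef]; field_simp
      rw [← hRdef] at h1
      rw [h2] at h1
      exact h1
    have hAtop : volume A < ⊤ := lt_of_le_of_lt (measure_mono hAsub) hDvoltop
    set m := (volume A).toReal with hmdef
    have hm0 : 0 < m := by
      refine ENNReal.toReal_pos ?_ hAtop.ne
      refine ne_of_gt (lt_of_lt_of_le ?_ hAlb)
      exact ENNReal.mul_pos (ENNReal.ofReal_pos.2 (pow_pos hr0 n)).ne' hDvolpos.ne'
    have hmlb : r ^ n * M ≤ m := by
      have h3 := ENNReal.toReal_mono hAtop.ne hAlb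
      rwa [ENNReal.toReal_mul, ENNReal.toReal_ofReal (by positivity)] at h3
    -- measurability of the time increment
    set f := fun y : EuclideanSpace ℝ (Fin n) => u y t - u y s with hfdef
    have hft : Measurable fun y : EuclideanSpace ℝ (Fin n) => u y t :=
      humeas.comp (measurable_id.prodMk measurable_const)
    have hfs : Measurable fun y : EuclideanSpace ℝ (Fin n) => u y s :=
      humeas.comp (measurable_id.prodMk measurable_const)
    have hfmeas : Measurable f := hft.sub hfs
    -- pointwise estimate on A
    have hpt : ∀ y ∈ A, ‖u x t - u x s‖ ≤ 2 * C₁ * ρ ^ δ + ‖f y‖ := by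
      intro y hy
      obtain ⟨hyb, hyD⟩ := hy
      have hxy : ‖x - y‖ ≤ ρ := by
        rw [← dist_eq_norm]
        exact Metric.mem_closedBall'.1 hyb
      have hxyδ : ‖x - y‖ ^ δ ≤ ρ ^ δ := Real.rpow_le_rpow (norm_nonneg _) hxy hδ0.le
      have e1 : ‖u x t - u y t‖ ≤ C₁ * ρ ^ δ :=
        le_trans (hspace t ht x hx y hyD) (mul_le_mul_of_nonneg_left hxyδ hC₁)
      have e3 : ‖u y s - u x s‖ ≤ C₁ * ρ ^ δ := by
        refine le_trans (hspace s hs y hyD x hx) ?_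
        rw [norm_sub_rev]
        exact mul_le_mul_of_nonneg_left hxyδ hC₁
      have hsplit : u x t - u x s = (u x t - u y t) + f y + (u y s - u x s) := by
        simp only [hfdef]; abel
      calc ‖u x t - u x s‖ = ‖(u x t - u y t) + f y + (u y s - u x s)‖ := by rw [← hsplit]
        _ ≤ ‖u x t - u y t‖ + ‖f y‖ + ‖u y s - u x s‖ := norm_add₃_le
        _ ≤ 2 * C₁ * ρ ^ δ + ‖f y‖ := by linarith
    set a := ‖u x t - u x s‖ with hadef
    have ha0 : 0 ≤ a := norm_nonneg _
    -- integrate the pointwise estimate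
    have hstep1 : ENNReal.ofReal a * volume A
        ≤ ENNReal.ofReal (2 * C₁ * ρ ^ δ) * volume A + ∫⁻ y in A, ‖f y‖₊ ∂volume := by
      calc ENNReal.ofReal a * volume A = ∫⁻ _ in A, ENNReal.ofReal a ∂volume :=
            (setLIntegral_const A _).symm
        _ ≤ ∫⁻ y in A, (ENNReal.ofReal (2 * C₁ * ρ ^ δ) + ‖f y‖₊) ∂volume := by
            refine setLIntegral_mono (measurable_const.add hfmeas.nnnorm.coe_nnreal_ennreal) ?_
            intro y hy
            rw [show (‖f y‖₊ : ℝ≥0∞) = ENNReal.ofReal ‖f y‖ from (ofReal_norm_eq_enorm (f y)).symm, ← ENNReal.ofReal_add (by positivity) (norm_nonneg _)]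
            exact ENNReal.ofReal_le_ofReal (hpt y hy)
        _ = _ := by rw [lintegral_add_left measurable_const, setLIntegral_const]
    -- Cauchy-Schwarz on A and the time Hoelder hypothesis
    have hstep2 : (∫⁻ y in A, ‖f y‖₊ ∂volume)
        ≤ ENNReal.ofReal (C₂ * h ^ β) * volume A ^ ((1:ℝ)/2) := by
      have h1 : (∫⁻ y in A, ‖f y‖₊ ∂volume) = eLpNorm f 1 (volume.restrict A) :=
        by rw [eLpNorm_one_eq_lintegral_enorm]; rfl
      rw [h1]
      have h2 := eLpNorm_le_eLpNorm_mul_rpow_measure_univ (p := 1) (q := 2)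
        (by norm_num) (hfmeas.aestronglyMeasurable (μ := volume.restrict A))
      refine le_trans h2 ?_
      rw [Measure.restrict_apply_univ]
      have h3 : eLpNorm f 2 (volume.restrict A) ≤ ENNReal.ofReal (C₂ * h ^ β) :=
        le_trans (eLpNorm_mono_measure f (Measure.restrict_mono hAsub le_rfl)) (htime s hs t ht)
      have hexp : 1 / (1:ℝ≥0∞).toReal - 1 / (2:ℝ≥0∞).toReal = (1:ℝ)/2 := by norm_num
      rw [hexp]
      exact mul_le_mul_left h3 _
    have hcomb : ENNReal.ofReal a * volume A
        ≤ ENNReal.ofReal (2 * C₁ * ρ ^ δ) * volume A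
          + ENNReal.ofReal (C₂ * h ^ β) * volume A ^ ((1:ℝ)/2) :=
      le_trans hstep1 (add_le_add_right hstep2 _)
    -- pass to real numbers
    have hfin1 : ENNReal.ofReal (2 * C₁ * ρ ^ δ) * volume A ≠ ⊤ :=
      ENNReal.mul_ne_top ENNReal.ofReal_ne_top hAtop.ne
    have hfin2 : ENNReal.ofReal (C₂ * h ^ β) * volume A ^ ((1:ℝ)/2) ≠ ⊤ :=
      ENNReal.mul_ne_top ENNReal.ofReal_ne_top
        (ENNReal.rpow_ne_top_of_nonneg (by norm_num) hAtop.ne)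
    have hreal : a * m ≤ 2 * C₁ * ρ ^ δ * m + C₂ * h ^ β * m ^ ((1:ℝ)/2) := by
      have e := ENNReal.toReal_mono (ENNReal.add_ne_top.2 ⟨hfin1, hfin2⟩) hcomb
      rw [ENNReal.toReal_add hfin1 hfin2, ENNReal.toReal_mul, ENNReal.toReal_mul,
        ENNReal.toReal_mul, ENNReal.toReal_ofReal ha0,
        ENNReal.toReal_ofReal (by positivity : (0:ℝ) ≤ 2 * C₁ * ρ ^ δ),
        ENNReal.toReal_ofReal (by positivity : (0:ℝ) ≤ C₂ * h ^ β),
        ← ENNReal.toReal_rpow] at e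
      exact e
    have hm12 : 0 < m ^ ((1:ℝ)/2) := Real.rpow_pos_of_pos hm0 _
    have hmm : m ^ ((1:ℝ)/2) * m ^ ((1:ℝ)/2) = m := by
      rw [← Real.rpow_add hm0]; norm_num
    have hdiv : a ≤ 2 * C₁ * ρ ^ δ + C₂ * h ^ β / m ^ ((1:ℝ)/2) := by
      rw [← mul_le_mul_iff_of_pos_right hm0]
      calc a * m ≤ 2 * C₁ * ρ ^ δ * m + C₂ * h ^ β * m ^ ((1:ℝ)/2) := hreal
        _ = (2 * C₁ * ρ ^ δ + C₂ * h ^ β / m ^ ((1:ℝ)/2)) * m := by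
            field_simp
            linear_combination (C₂ * h ^ β) * hmm
    have hmono : C₂ * h ^ β / m ^ ((1:ℝ)/2) ≤ C₂ * h ^ β / (r ^ n * M) ^ ((1:ℝ)/2) :=
      div_le_div_of_nonneg_left (by positivity)
        (Real.rpow_pos_of_pos (by positivity) _)
        (Real.rpow_le_rpow (by positivity) hmlb (by norm_num))
    -- algebraic identification of the two terms
    have hr_δ : r ^ δ = h ^ γ / T ^ γ := by
      rw [hrdef, ← Real.rpow_mul (le_of_lt hhT0), ← hγdef, Real.div_rpow hh0 hT.le]
    have hterm1 : 2 * C₁ * ρ ^ δ = 2 * C₁ * R ^ δ / T ^ γ * h ^ γ := by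
      rw [hρdef, Real.mul_rpow hRpos.le hr0.le, hr_δ]; ring
    have hr_n : (r ^ n * M) ^ ((1:ℝ)/2) = (h / T) ^ (θ * n / 2) * M ^ ((1:ℝ)/2) := by
      rw [Real.mul_rpow (by positivity) hM.le, hrdef, ← Real.rpow_natCast ((h/T) ^ θ) n,
        ← Real.rpow_mul (le_of_lt hhT0), ← Real.rpow_mul (le_of_lt hhT0)]
      congr 2
      ring
    have hterm2 : C₂ * h ^ β / ((h / T) ^ (θ * n / 2) * M ^ ((1:ℝ)/2))
        = C₂ * T ^ (θ * n / 2) / M ^ ((1:ℝ)/2) * h ^ γ := by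
      rw [Real.div_rpow hh0 hT.le, ← hβγ, Real.rpow_sub hh]
      have h4 : (0:ℝ) < h ^ (θ * n / 2) := Real.rpow_pos_of_pos hh _
      have h5 : (0:ℝ) < T ^ (θ * n / 2) := Real.rpow_pos_of_pos hT _
      have h6 : (0:ℝ) < M ^ ((1:ℝ)/2) := Real.rpow_pos_of_pos hM _
      field_simp
    calc a ≤ 2 * C₁ * ρ ^ δ + C₂ * h ^ β / m ^ ((1:ℝ)/2) := hdiv
      _ ≤ 2 * C₁ * ρ ^ δ + C₂ * h ^ β / (r ^ n * M) ^ ((1:ℝ)/2) := by linarith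
      _ = 2 * C₁ * R ^ δ / T ^ γ * h ^ γ + C₂ * T ^ (θ * n / 2) / M ^ ((1:ℝ)/2) * h ^ γ := by
          rw [hterm1, hr_n, hterm2]
      _ = K * h ^ γ := by rw [hKdef]; ring
  calc ‖u x t - u x s‖ ≤ K * h ^ γ := key
    _ = K * (h ^ η * h ^ (γ - η)) := by
        rw [← Real.rpow_add hh]
        congr 1
        ring
    _ ≤ K * (h ^ η * T ^ (γ - η)) := by
        refine mul_le_mul_of_nonneg_left ?_ hK
        refine mul_le_mul_of_nonneg_left ?_ (Real.rpow_nonneg hh0 η)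
        exact Real.rpow_le_rpow hh0 hhT (by linarith)
    _ = K * T ^ (γ - η) * h ^ η := by ring
private lemma aux_rpow_interp {b B p q : ℝ} (hb : 0 ≤ b) (hbB : b ≤ B) (hq : 0 < q)
    (hqp : q ≤ p) : b ^ p ≤ b ^ q * B ^ (p - q) := by
  rcases eq_or_lt_of_le hb with h0 | h0
  · rw [← h0, Real.zero_rpow (ne_of_gt (lt_of_lt_of_le hq hqp)), Real.zero_rpow hq.ne']
    simp
  · calc b ^ p = b ^ q * b ^ (p - q) := by rw [← Real.rpow_add h0]; congr 1; ring
      _ ≤ b ^ q * B ^ (p - q) :=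
        mul_le_mul_of_nonneg_left (Real.rpow_le_rpow h0.le hbB (by linarith))
          (Real.rpow_nonneg hb q)

/-- uniform spatial Hölder continuity together with Hölder continuity in time
with values in `L²(D)` imply joint space-time Hölder continuity, with temporal exponent
`η = min(βδ/n, β/2)` and joint exponent `min(δ, η)`. -/
theorem joint_Hoelder_of_space_Hoelder_and_time_L2_Hoelder {n N : ℕ} (hn : 0 < n)
    (D : Set (EuclideanSpace ℝ (Fin n))) (hDne : D.Nonempty)
    (hDbd : Bornology.IsBounded D) (hDconv : Convex ℝ D) (hDopen : IsOpen D)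
    (T : ℝ) (hT : 0 < T) (δ : ℝ) (hδ : δ ∈ Set.Ioc (0 : ℝ) 1) (β : ℝ) (hβ : 0 < β)
    (C₁ C₂ : ℝ) (hC₁ : 0 ≤ C₁) (hC₂ : 0 ≤ C₂)
    (u : EuclideanSpace ℝ (Fin n) → ℝ → EuclideanSpace ℝ (Fin N))
    (humeas : Measurable (fun q : EuclideanSpace ℝ (Fin n) × ℝ => u q.1 q.2))
    (hspace : ∀ t ∈ Set.Icc (0 : ℝ) T, ∀ x ∈ D, ∀ y ∈ D,
      ‖u x t - u y t‖ ≤ C₁ * ‖x - y‖ ^ δ)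
    (htime : ∀ s ∈ Set.Icc (0 : ℝ) T, ∀ t ∈ Set.Icc (0 : ℝ) T,
      eLpNorm (fun x => u x t - u x s) 2 (volume.restrict D)
        ≤ ENNReal.ofReal (C₂ * |t - s| ^ β)) :
    ∃ C₄ : ℝ,
      (∀ x ∈ D, ∀ s ∈ Set.Icc (0 : ℝ) T, ∀ t ∈ Set.Icc (0 : ℝ) T,
        ‖u x t - u x s‖ ≤ C₄ * |t - s| ^ (min (β * δ / n) (β / 2))) ∧
      ∃ C₅ : ℝ, ∀ x ∈ D, ∀ y ∈ D, ∀ s ∈ Set.Icc (0 : ℝ) T, ∀ t ∈ Set.Icc (0 : ℝ) T,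
        ‖u x t - u y s‖
          ≤ C₅ * (‖x - y‖ + |t - s|) ^ (min δ (min (β * δ / n) (β / 2))) := by
  -- the diameter of `D` is positive
  obtain ⟨x₀, hx₀⟩ := hDne
  obtain ⟨ε, hε, hball⟩ := Metric.isOpen_iff.1 hDopen x₀ hx₀
  set e : EuclideanSpace ℝ (Fin n) := EuclideanSpace.single ⟨0, hn⟩ (ε / 2) with hedef
  have he : ‖e‖ = ε / 2 := by
    rw [hedef, EuclideanSpace.norm_single]
    exact abs_of_pos (by linarith)
  have hy₀ : x₀ + e ∈ D := by
    apply hball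
    rw [Metric.mem_ball, dist_eq_norm, add_sub_cancel_left, he]
    linarith
  have hRpos : 0 < Metric.diam D := by
    have h1 : dist (x₀ + e) x₀ ≤ Metric.diam D := Metric.dist_le_diam_of_mem hDbd hy₀ hx₀
    rw [dist_eq_norm, add_sub_cancel_left, he] at h1
    linarith
  obtain ⟨C₄, hC₄0, hC₄⟩ := aux_key hn D ⟨x₀, hx₀⟩ hDbd hDconv hDopen T hT δ hδ β hβ
    C₁ C₂ hC₁ hC₂ u humeas hRpos hspace htime
  refine ⟨C₄, hC₄, ?_⟩
  have hn' : (0:ℝ) < (n : ℝ) := by exact_mod_cast hn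
  set η : ℝ := min (β * δ / n) (β / 2) with hηdef
  have hη : 0 < η := lt_min (div_pos (mul_pos hβ hδ.1) hn') (by positivity)
  set ε' : ℝ := min δ η with hε'def
  have hε'0 : 0 < ε' := lt_min hδ.1 hη
  have hε'δ : ε' ≤ δ := min_le_left _ _
  have hε'η : ε' ≤ η := min_le_right _ _
  set B : ℝ := Metric.diam D + T with hBdef
  refine ⟨C₁ * B ^ (δ - ε') + C₄ * B ^ (η - ε'), ?_⟩
  intro x hx y hy s hs t ht
  set w : ℝ := ‖x - y‖ + |t - s| with hwdef
  have hw0 : 0 ≤ w := by positivity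
  have hxyR : ‖x - y‖ ≤ Metric.diam D := by
    rw [← dist_eq_norm]
    exact Metric.dist_le_diam_of_mem hDbd hx hy
  have hhT : |t - s| ≤ T := by
    rw [abs_sub_le_iff]
    constructor <;> [linarith [ht.2, hs.1]; linarith [hs.2, ht.1]]
  have hwB : w ≤ B := add_le_add hxyR hhT
  have tri : ‖u x t - u y s‖ ≤ C₁ * ‖x - y‖ ^ δ + C₄ * |t - s| ^ η := by
    calc ‖u x t - u y s‖ = ‖(u x t - u y t) + (u y t - u y s)‖ := by congr 1; abel
      _ ≤ ‖u x t - u y t‖ + ‖u y t - u y s‖ := norm_add_le _ _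
      _ ≤ C₁ * ‖x - y‖ ^ δ + C₄ * |t - s| ^ η :=
        add_le_add (hspace t ht x hx y hy) (hC₄ y hy s hs t ht)
  have b1 : ‖x - y‖ ^ δ ≤ w ^ ε' * B ^ (δ - ε') := by
    refine le_trans (Real.rpow_le_rpow (norm_nonneg _) (show ‖x - y‖ ≤ w from le_add_of_nonneg_right (abs_nonneg _)) hδ.1.le) ?_
    exact aux_rpow_interp hw0 hwB hε'0 hε'δ
  have b2 : |t - s| ^ η ≤ w ^ ε' * B ^ (η - ε') := by
    refine le_trans (Real.rpow_le_rpow (abs_nonneg _) (show |t - s| ≤ w from le_add_of_nonneg_left (norm_nonneg _)) hη.le) ?_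
    exact aux_rpow_interp hw0 hwB hε'0 hε'η
  calc ‖u x t - u y s‖ ≤ C₁ * ‖x - y‖ ^ δ + C₄ * |t - s| ^ η := tri
    _ ≤ C₁ * (w ^ ε' * B ^ (δ - ε')) + C₄ * (w ^ ε' * B ^ (η - ε')) :=
      add_le_add (mul_le_mul_of_nonneg_left b1 hC₁) (mul_le_mul_of_nonneg_left b2 hC₄0)
    _ = (C₁ * B ^ (δ - ε') + C₄ * B ^ (η - ε')) * w ^ ε' := by ring
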